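/- Let n ≥ 3 be an integer and let h₁, …, hₙ be real numbers such that all n partial derivatives of g₂ at (h₁,…,hₙ) are equal to a common value λ (i.e., the gradient of g₂ is collinear with (1,…,1)). Then there exists a real number b with h₁ = 2b, h₂ = 9b, and h₃ = h₄ = ⋯ = hₙ = 3b; if moreover h₁ + ⋯ + hₙ = K, then b = K/(3n+5). -/
import Mathlib


open Finset

theorem stmt_11 (n : ℕ) (hn : 3 ≤ n) (h : Fin n → ℝ) (lam : ℝ)
    (grad1 : (∑ j : Fin n, if 1 ≤ (j : ℕ) then h j else 0)
        - (1 / ((n : ℝ) - 1)) * (∑ j : Fin n, if 1 ≤ (j : ℕ) then h j else 0)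
        - 2 * h ⟨0, by omega⟩ + (2 / ((n : ℝ) - 1)) * h ⟨0, by omega⟩ = lam)
    (grad2 : (∑ j : Fin n, if (j : ℕ) ≠ 1 then h j else 0)
        - (1 / ((n : ℝ) - 1)) * h ⟨0, by omega⟩ = lam)
    (gradi : ∀ i : Fin n, 2 ≤ (i : ℕ) →
        (∑ j : Fin n, if j ≠ i then h j else 0)
          - (1 / ((n : ℝ) - 1)) * h ⟨0, by omega⟩ - 2 * h i = lam) :
    ∃ b : ℝ, h ⟨0, by omega⟩ = 2 * b ∧ h ⟨1, by omega⟩ = 9 * b ∧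
      (∀ i : Fin n, 2 ≤ (i : ℕ) → h i = 3 * b) ∧
      (∀ K : ℝ, ∑ i, h i = K → b = K / (3 * (n : ℝ) + 5)) := by
  set S : ℝ := ∑ i, h i with hSdef
  set i0 : Fin n := ⟨0, by omega⟩
  set i1 : Fin n := ⟨1, by omega⟩
  set i2 : Fin n := ⟨2, by omega⟩
  have hn' : (3 : ℝ) ≤ (n : ℝ) := by exact_mod_cast hn
  have hc1 : (n : ℝ) - 1 ≠ 0 := by linarith
  have hc2 : (n : ℝ) - 2 ≠ 0 := by linarith
  have hsum : ∀ i : Fin n, ∑ j, (if j ≠ i then h j else 0) = S - h i := by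
    intro i
    have hx : ∑ j, (if j = i then h j else 0) = h i :=
      Finset.sum_ite_eq' Finset.univ i h |>.trans (by simp)
    calc ∑ j, (if j ≠ i then h j else 0)
        = ∑ j, (h j - if j = i then h j else 0) := by
          apply Finset.sum_congr rfl
          intro j _
          by_cases hj : j = i <;> simp [hj]
      _ = S - h i := by rw [Finset.sum_sub_distrib, hx]
  have s1 : ∑ j : Fin n, (if 1 ≤ (j : ℕ) then h j else 0) = S - h i0 := by
    rw [← hsum i0]
    apply Finset.sum_congr rfl
    intro j _
    have : (1 ≤ (j : ℕ)) ↔ j ≠ i0 := by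
      simp [Fin.ext_iff, i0]; omega
    rw [if_congr this rfl rfl]
  have s2 : ∑ j : Fin n, (if (j : ℕ) ≠ 1 then h j else 0) = S - h i1 := by
    rw [← hsum i1]
    apply Finset.sum_congr rfl
    intro j _
    have : ((j : ℕ) ≠ 1) ↔ j ≠ i1 := by
      simp [Fin.ext_iff, i1]
    rw [if_congr this rfl rfl]
  rw [s1] at grad1
  rw [s2] at grad2
  have Ei : ∀ i : Fin n, 2 ≤ (i : ℕ) →
      (S - h i) - (1 / ((n : ℝ) - 1)) * h i0 - 2 * h i = lam := by
    intro i hi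
    have := gradi i hi
    rwa [hsum i] at this
  have E3 := Ei i2 (by simp [i2])
  -- all coordinates with index ≥ 2 are equal to h i2
  have hEq : ∀ i : Fin n, 2 ≤ (i : ℕ) → h i = h i2 := by
    intro i hi
    have := Ei i hi
    linarith [E3]
  -- h i1 = 3 * h i2
  have hE1 : h i1 = 3 * h i2 := by linarith [grad2, E3]
  -- decompose the sum
  have hS : S = (n : ℝ) * h i2 + (h i0 - h i2) + (h i1 - h i2) := by
    have : S = ∑ i : Fin n, (h i2 + (if i = i0 then h i0 - h i2 else 0)
        + (if i = i1 then h i1 - h i2 else 0)) := by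
      apply Finset.sum_congr rfl
      intro i _
      have h01 : ¬ (i0 = i1) := by simp [i0, i1, Fin.ext_iff]
      have h10 : ¬ (i1 = i0) := by simp [i0, i1, Fin.ext_iff]
      by_cases h0 : i = i0
      · have : ¬ i = i1 := by subst h0; exact h01
        simp [h0, this, h01, h10]
      · by_cases h1 : i = i1
        · have : ¬ i = i0 := by subst h1; exact h10
          simp [h1, this, h01, h10]
        · have hi : 2 ≤ (i : ℕ) := by
            simp [Fin.ext_iff, i0, i1] at h0 h1
            omega
          simp [h0, h1, hEq i hi]
    rw [this]
    simp [Finset.sum_add_distrib, Finset.sum_ite_eq', Finset.card_univ]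
  -- key relation: 2 * h i2 = 3 * h i0
  have key : 2 * h i2 = 3 * h i0 := by
    have hk : ((n : ℝ) - 2) * (2 * h i2 - 3 * h i0) = 0 := by
      field_simp at grad1 E3
      linear_combination grad1 - E3 + hS + hE1
    rcases mul_eq_zero.mp hk with hk | hk
    · exact absurd hk hc2
    · linarith
  refine ⟨h i0 / 2, by ring, by linarith, fun i hi => by
    have := hEq i hi; linarith, fun K hK => ?_⟩
  have h35 : 3 * (n : ℝ) + 5 ≠ 0 := by linarith
  have hSval : S = (3 * (n : ℝ) + 5) * (h i0 / 2) := by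
    rw [hS]; field_simp; nlinarith [key, hE1]
  field_simp
  linarith [hSval, hK, hSdef]
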